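/- For n ≥ 18, the spectral radius of the graph K_n \ E(S_{n−4} ∪ K_3) is strictly less than the spectral radius of K_n \ E(S_{n−3}). -/

import Mathlib

/-- `K_n \ E(S_{n-3})`: the complete graph on `n` vertices minus the edges of a star
`S_{n-3}` with center `0` and leaves `1, …, n-4`. -/
def KnDelS (n : ℕ) : SimpleGraph (Fin n) :=
  ⊤ \ SimpleGraph.fromRel (fun u v => u.val = 0 ∧ 1 ≤ v.val ∧ v.val ≤ n - 4)

/-- `K_n \ E(S_{n-4} ∪ S_4)`: the complete graph on `n` vertices minus the edges of a star
`S_{n-4}` (center `0`, leaves `1, …, n-5`) and of a disjoint star `S_4` (center `n-4`,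
leaves `n-3, n-2, n-1`). -/
def KnDelSS (n : ℕ) : SimpleGraph (Fin n) :=
  ⊤ \ SimpleGraph.fromRel (fun u v =>
    (u.val = 0 ∧ 1 ≤ v.val ∧ v.val ≤ n - 5) ∨ (u.val = n - 4 ∧ n - 3 ≤ v.val))

/-- `K_n \ E(S_{n-4} ∪ K_3)`: the complete graph on `n` vertices minus the edges of a star
`S_{n-4}` (center `0`, leaves `1, …, n-5`) and of a disjoint triangle `K_3` on
`{n-3, n-2, n-1}`. -/
def KnDelSK (n : ℕ) : SimpleGraph (Fin n) :=
  ⊤ \ SimpleGraph.fromRel (fun u v =>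
    (u.val = 0 ∧ 1 ≤ v.val ∧ v.val ≤ n - 5) ∨ (n - 3 ≤ u.val ∧ n - 3 ≤ v.val))

/-- The spectral radius of a finite graph: the largest (real) eigenvalue of its
adjacency matrix, expressed as the supremum of the real spectrum. -/
noncomputable def specRad {V : Type*} [Fintype V] [DecidableEq V] (G : SimpleGraph V) : ℝ :=
  letI := Classical.decRel G.Adj
  sSup (spectrum ℝ (G.adjMatrix ℝ))

open Matrix Finset

section SpectralLemmas
variable {m : ℕ}

private lemma spec_eq_range' {A : Matrix (Fin m) (Fin m) ℝ} (hA : A.IsHermitian) :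
    spectrum ℝ A = Set.range hA.eigenvalues := by
  conv_lhs => rw [hA.spectral_theorem]
  rw [Unitary.conjStarAlgAut_apply, Unitary.spectrum_star_right_conjugate, spectrum_diagonal]
  ext x
  simp [RCLike.ofReal_real_eq_id]

private lemma exists_eigvec' {A : Matrix (Fin m) (Fin m) ℝ} {μ : ℝ} (h : μ ∈ spectrum ℝ A) :
    ∃ x : Fin m → ℝ, x ≠ 0 ∧ A *ᵥ x = μ • x := by
  rw [← AlgEquiv.spectrum_eq (Matrix.toLinAlgEquiv' (R := ℝ) (n := Fin m)),
    ← Module.End.hasEigenvalue_iff_mem_spectrum] at h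
  obtain ⟨x, hx, hx0⟩ := h.exists_hasEigenvector
  refine ⟨x, hx0, ?_⟩
  have := Module.End.mem_eigenspace_iff.mp hx
  simpa [Matrix.toLinAlgEquiv'_apply, Matrix.toLin'_apply] using this

private lemma upper_bound' {A : Matrix (Fin m) (Fin m) ℝ} (hA : A.IsHermitian)
    (hnn : ∀ i j, 0 ≤ A i j) {v : Fin m → ℝ} (hv : ∀ i, 0 < v i) {lam : ℝ} (hlam : 0 ≤ lam)
    (hAv : ∀ i, (A *ᵥ v) i ≤ lam * v i) :
    sSup (spectrum ℝ A) ≤ lam := by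
  apply Real.sSup_le _ hlam
  intro μ hμ
  obtain ⟨x, hx0, hx⟩ := exists_eigvec' hμ
  set y : Fin m → ℝ := fun i => |x i| with hy
  have hsymm : ∀ i j, A i j = A j i := by
    intro i j
    conv_lhs => rw [← hA]
    simp [Matrix.conjTranspose_apply]
  have key : ∀ i, μ * y i ≤ (A *ᵥ y) i := by
    intro i
    have h1 : (A *ᵥ x) i = μ * x i := by rw [hx]; simp
    calc μ * y i ≤ |μ| * |x i| :=
          mul_le_mul_of_nonneg_right (le_abs_self μ) (abs_nonneg _)
      _ = |(A *ᵥ x) i| := by rw [h1, abs_mul]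
      _ ≤ (A *ᵥ y) i := by
          simp only [Matrix.mulVec, dotProduct, hy]
          refine (Finset.abs_sum_le_sum_abs _ _).trans ?_
          apply Finset.sum_le_sum; intro j _
          rw [abs_mul, abs_of_nonneg (hnn i j)]
  obtain ⟨i₀, hi₀⟩ : ∃ i, x i ≠ 0 := by
    by_contra h
    push_neg at h
    exact hx0 (funext fun i => h i)
  have S_pos : 0 < ∑ i, v i * y i := by
    apply Finset.sum_pos'
    · exact fun i _ => mul_nonneg (hv i).le (abs_nonneg _)
    · exact ⟨i₀, Finset.mem_univ _, mul_pos (hv i₀) (abs_pos.mpr hi₀)⟩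
  have chain : μ * ∑ i, v i * y i ≤ lam * ∑ i, v i * y i := by
    calc μ * ∑ i, v i * y i = ∑ i, v i * (μ * y i) := by
            rw [Finset.mul_sum]; apply Finset.sum_congr rfl; intros; ring
      _ ≤ ∑ i, v i * (A *ᵥ y) i :=
            Finset.sum_le_sum fun i _ => mul_le_mul_of_nonneg_left (key i) (hv i).le
      _ = ∑ j, y j * (A *ᵥ v) j := by
            simp only [Matrix.mulVec, dotProduct, Finset.mul_sum, Finset.sum_mul]
            rw [Finset.sum_comm]
            apply Finset.sum_congr rfl; intro j _
            apply Finset.sum_congr rfl; intro i _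
            rw [hsymm j i]; ring
      _ ≤ ∑ j, y j * (lam * v j) :=
            Finset.sum_le_sum fun j _ => mul_le_mul_of_nonneg_left (hAv j) (abs_nonneg _)
      _ = lam * ∑ i, v i * y i := by
            rw [Finset.mul_sum]; apply Finset.sum_congr rfl; intros; ring
  exact le_of_mul_le_mul_right chain S_pos

private lemma lower_bound' {A : Matrix (Fin m) (Fin m) ℝ} (hm : 0 < m) (hA : A.IsHermitian)
    {w : Fin m → ℝ} (hw : ∀ i, 0 ≤ w i) (hw0 : w ≠ 0) {lam : ℝ}
    (hAw : ∀ i, lam * w i ≤ (A *ᵥ w) i) :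
    lam ≤ sSup (spectrum ℝ A) := by
  have hne : Nonempty (Fin m) := ⟨⟨0, hm⟩⟩
  obtain ⟨i₀, -, hi₀⟩ := Finset.exists_max_image Finset.univ hA.eigenvalues
    ⟨⟨0, hm⟩, Finset.mem_univ _⟩
  set μ := hA.eigenvalues i₀ with hμ
  have hmem : μ ∈ spectrum ℝ A := hA.eigenvalues_mem_spectrum_real i₀
  have hbdd : BddAbove (spectrum ℝ A) := by
    rw [spec_eq_range' hA]; exact (Set.finite_range _).bddAbove
  refine le_trans ?_ (le_csSup hbdd hmem)
  have hpsd : (μ • (1 : Matrix (Fin m) (Fin m) ℝ) - A).PosSemidef := by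
    have hdiag : (Matrix.diagonal (fun i => μ - hA.eigenvalues i)).PosSemidef :=
      Matrix.posSemidef_diagonal_iff.mpr fun i => sub_nonneg.mpr (hi₀ i (Finset.mem_univ i))
    have h2 := hdiag.mul_mul_conjTranspose_same (hA.eigenvectorUnitary : Matrix (Fin m) (Fin m) ℝ)
    have hU : (hA.eigenvectorUnitary : Matrix (Fin m) (Fin m) ℝ) *
        (hA.eigenvectorUnitary : Matrix (Fin m) (Fin m) ℝ)ᴴ = 1 := by
      rw [← Matrix.star_eq_conjTranspose]
      exact Matrix.mem_unitaryGroup_iff.mp hA.eigenvectorUnitary.2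
    have hdd : Matrix.diagonal (fun i => μ - hA.eigenvalues i)
        = μ • (1 : Matrix (Fin m) (Fin m) ℝ)
          - Matrix.diagonal (RCLike.ofReal ∘ hA.eigenvalues) := by
      ext i j
      by_cases h : i = j <;>
        simp [Matrix.diagonal_apply, Matrix.one_apply, h, RCLike.ofReal_real_eq_id]
    rw [hdd] at h2
    convert h2 using 1
    rw [Matrix.mul_sub, Matrix.sub_mul, Matrix.mul_smul, Matrix.mul_one, Matrix.smul_mul, hU]
    congr 1
    conv_lhs => rw [hA.spectral_theorem]
    rw [Unitary.conjStarAlgAut_apply, Matrix.star_eq_conjTranspose]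
  have hq := hpsd.dotProduct_mulVec_nonneg w
  have hsw : star w = w := by funext i; exact star_trivial _
  rw [hsw, Matrix.sub_mulVec, Matrix.smul_mulVec, Matrix.one_mulVec,
    dotProduct_sub, dotProduct_smul, sub_nonneg] at hq
  have hlow : lam * (w ⬝ᵥ w) ≤ w ⬝ᵥ (A *ᵥ w) := by
    simp only [dotProduct, Finset.mul_sum]
    refine Finset.sum_le_sum fun i _ => ?_
    calc lam * (w i * w i) = w i * (lam * w i) := by ring
      _ ≤ w i * (A *ᵥ w) i := mul_le_mul_of_nonneg_left (hAw i) (hw i)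
  obtain ⟨i₁, hi₁⟩ : ∃ i, w i ≠ 0 := by
    by_contra h; push_neg at h; exact hw0 (funext fun i => h i)
  have hww : 0 < w ⬝ᵥ w := by
    apply Finset.sum_pos'
    · exact fun i _ => mul_self_nonneg _
    · exact ⟨i₁, Finset.mem_univ _, mul_self_pos.mpr hi₁⟩
  have := hlow.trans hq
  rw [smul_eq_mul] at this
  nlinarith [this, hww]

private lemma adj_isHermitian' {G : SimpleGraph (Fin m)} [DecidableRel G.Adj] :
    (G.adjMatrix ℝ).IsHermitian := by
  rw [Matrix.IsHermitian, Matrix.conjTranspose_eq_transpose_of_trivial]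
  exact (SimpleGraph.isSymm_adjMatrix G)

private lemma adj_nonneg' {G : SimpleGraph (Fin m)} [DecidableRel G.Adj] (i j : Fin m) :
    0 ≤ G.adjMatrix ℝ i j := by
  by_cases h : G.Adj i j <;> simp [h]

private lemma mulVec_sdiff' (H : SimpleGraph (Fin m)) [DecidableRel H.Adj]
    [DecidableRel (⊤ \ H : SimpleGraph (Fin m)).Adj] (v : Fin m → ℝ) (i : Fin m) :
    (((⊤ \ H : SimpleGraph (Fin m)).adjMatrix ℝ) *ᵥ v) i
      = (∑ j, v j) - v i - ∑ j, (if H.Adj i j then v j else 0) := by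
  have hpt : ∀ j, (if (⊤ \ H : SimpleGraph (Fin m)).Adj i j then v j else 0)
      = v j - (if i = j then v j else 0) - (if H.Adj i j then v j else 0) := by
    intro j
    by_cases h1 : i = j
    · subst h1
      simp
    · by_cases h2 : H.Adj i j
      · rw [if_neg (by simp [SimpleGraph.sdiff_adj, h2]), if_neg h1, if_pos h2]; ring
      · rw [if_pos (by simp [SimpleGraph.sdiff_adj, h1, h2]), if_neg h1, if_neg h2]; ring
  have h0 : (((⊤ \ H : SimpleGraph (Fin m)).adjMatrix ℝ) *ᵥ v) i
      = ∑ j, (if (⊤ \ H : SimpleGraph (Fin m)).Adj i j then v j else 0) := by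
    simp [Matrix.mulVec, dotProduct, SimpleGraph.adjMatrix_apply, ite_mul]
  rw [h0, Finset.sum_congr rfl (fun j _ => hpt j), Finset.sum_sub_distrib,
    Finset.sum_sub_distrib, Finset.sum_ite_eq Finset.univ i v, if_pos (Finset.mem_univ i)]

private lemma sum_range_eval' {n : ℕ} (hn : 18 ≤ n) (F : ℕ → ℝ) (x y z u : ℝ)
    (h0 : F 0 = x) (h1 : ∀ j, 1 ≤ j → j ≤ n - 5 → F j = y) (h2 : F (n - 4) = z)
    (h3 : ∀ j, n - 3 ≤ j → j < n → F j = u) :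
    ∑ j ∈ Finset.range n, F j = x + ((n : ℝ) - 5) * y + z + 3 * u := by
  rw [Finset.range_eq_Ico,
    ← Finset.sum_Ico_consecutive F (show 0 ≤ n - 3 by omega) (show n - 3 ≤ n by omega),
    ← Finset.sum_Ico_consecutive F (show 0 ≤ n - 4 by omega) (show n - 4 ≤ n - 3 by omega),
    ← Finset.sum_Ico_consecutive F (show 0 ≤ 1 by omega) (show 1 ≤ n - 4 by omega)]
  have e1 : Finset.Ico 0 1 = {0} := rfl
  have e2 : Finset.Ico (n - 4) (n - 3) = {n - 4} := by
    rw [show n - 3 = (n - 4) + 1 by omega]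
    exact Nat.Ico_succ_singleton _
  rw [e1, e2, Finset.sum_singleton, Finset.sum_singleton, h0, h2]
  have s1 : ∑ j ∈ Finset.Ico 1 (n - 4), F j = ((n : ℝ) - 5) * y := by
    have hcg : ∀ j ∈ Finset.Ico 1 (n - 4), F j = y := by
      intro j hj; rw [Finset.mem_Ico] at hj; exact h1 j hj.1 (by omega)
    rw [Finset.sum_congr rfl hcg, Finset.sum_const, Nat.card_Ico, nsmul_eq_mul,
      show n - 4 - 1 = n - 5 by omega, Nat.cast_sub (by omega : 5 ≤ n)]
    norm_num
  have s2 : ∑ j ∈ Finset.Ico (n - 3) n, F j = 3 * u := by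
    have hcg : ∀ j ∈ Finset.Ico (n - 3) n, F j = u := by
      intro j hj; rw [Finset.mem_Ico] at hj; exact h3 j hj.1 hj.2
    rw [Finset.sum_congr rfl hcg, Finset.sum_const, Nat.card_Ico, nsmul_eq_mul,
      show n - (n - 3) = 3 by omega]
    norm_num
  rw [s1, s2]

end SpectralLemmas

noncomputable def fS (n : ℕ) : ℕ → ℝ := fun j => if j = 0 then 3 else (n : ℝ) - 2

noncomputable def fSK (n : ℕ) : ℕ → ℝ := fun j =>
  if j = 0 then 8 * (n : ℝ) + 8
  else if j ≤ n - 5 then 2 * (n : ℝ) ^ 2 - 8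
  else if j = n - 4 then 2 * (n : ℝ) ^ 2
  else 2 * (n : ℝ) ^ 2 - 3 * (n : ℝ) - 12

private lemma S_rows {n : ℕ} (hn : 18 ≤ n)
    [DecidableRel (⊤ \ SimpleGraph.fromRel
      (fun u v : Fin n => u.val = 0 ∧ 1 ≤ v.val ∧ v.val ≤ n - 4) : SimpleGraph (Fin n)).Adj]
    (i : Fin n) :
    ((n : ℝ) - 2) * fS n i.val
      ≤ (((⊤ \ SimpleGraph.fromRel
          (fun u v : Fin n => u.val = 0 ∧ 1 ≤ v.val ∧ v.val ≤ n - 4) :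
            SimpleGraph (Fin n)).adjMatrix ℝ) *ᵥ (fun j => fS n j.val)) i := by
  classical
  have hn' : (18 : ℝ) ≤ (n : ℝ) := by exact_mod_cast hn
  have hi := i.isLt
  have htot : (∑ j : Fin n, fS n j.val)
      = 3 + ((n:ℝ) - 5) * ((n:ℝ) - 2) + ((n:ℝ) - 2) + 3 * ((n:ℝ) - 2) := by
    rw [Fin.sum_univ_eq_sum_range (fun j => fS n j) n]
    refine sum_range_eval' hn _ _ _ _ _ ?_ ?_ ?_ ?_
    · exact if_pos rfl
    · intro j h1 h2; exact if_neg (by omega)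
    · exact if_neg (by omega)
    · intro j h1 h2; exact if_neg (by omega)
  rw [mulVec_sdiff', htot]
  by_cases h0 : i.val = 0
  · have hadj : ∀ j : Fin n,
        (SimpleGraph.fromRel
          (fun u v : Fin n => u.val = 0 ∧ 1 ≤ v.val ∧ v.val ≤ n - 4)).Adj i j
          ↔ (1 ≤ j.val ∧ j.val ≤ n - 4) := by
      intro j
      rw [SimpleGraph.fromRel_adj, ne_eq, Fin.ext_iff]
      omega
    have hdel : (∑ j : Fin n, if (SimpleGraph.fromRel
          (fun u v : Fin n => u.val = 0 ∧ 1 ≤ v.val ∧ v.val ≤ n - 4)).Adj i j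
          then fS n j.val else 0)
        = 0 + ((n:ℝ) - 5) * ((n:ℝ) - 2) + ((n:ℝ) - 2) + 3 * 0 := by
      rw [Finset.sum_congr rfl (fun j _ => if_congr (hadj j) rfl rfl),
        Fin.sum_univ_eq_sum_range (fun k => if 1 ≤ k ∧ k ≤ n - 4 then fS n k else 0) n]
      refine sum_range_eval' hn _ _ _ _ _ ?_ ?_ ?_ ?_
      · exact if_neg (by omega)
      · intro j h1 h2
        show (if 1 ≤ j ∧ j ≤ n - 4 then fS n j else 0) = (n:ℝ) - 2
        rw [if_pos ⟨h1, by omega⟩]; exact if_neg (by omega)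
      · show (if 1 ≤ n - 4 ∧ n - 4 ≤ n - 4 then fS n (n - 4) else 0) = (n:ℝ) - 2
        rw [if_pos ⟨by omega, le_refl _⟩]; exact if_neg (by omega)
      · intro j h1 h2
        show (if 1 ≤ j ∧ j ≤ n - 4 then fS n j else 0) = 0
        exact if_neg (by omega)
    rw [hdel, show fS n i.val = 3 from if_pos h0]
    nlinarith [hn']
  · by_cases hA : i.val ≤ n - 4
    · have hadj : ∀ j : Fin n,
          (SimpleGraph.fromRel
            (fun u v : Fin n => u.val = 0 ∧ 1 ≤ v.val ∧ v.val ≤ n - 4)).Adj i j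
            ↔ (j.val = 0) := by
        intro j
        rw [SimpleGraph.fromRel_adj, ne_eq, Fin.ext_iff]
        omega
      have hdel : (∑ j : Fin n, if (SimpleGraph.fromRel
            (fun u v : Fin n => u.val = 0 ∧ 1 ≤ v.val ∧ v.val ≤ n - 4)).Adj i j
            then fS n j.val else 0)
          = 3 + ((n:ℝ) - 5) * 0 + 0 + 3 * 0 := by
        rw [Finset.sum_congr rfl (fun j _ => if_congr (hadj j) rfl rfl),
          Fin.sum_univ_eq_sum_range (fun k => if k = 0 then fS n k else 0) n]
        refine sum_range_eval' hn _ _ _ _ _ ?_ ?_ ?_ ?_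
        · show (if (0:ℕ) = 0 then fS n 0 else 0) = 3
          rw [if_pos rfl]; exact if_pos rfl
        · intro j h1 h2
          show (if j = 0 then fS n j else 0) = 0
          exact if_neg (by omega)
        · show (if n - 4 = 0 then fS n (n - 4) else 0) = 0
          exact if_neg (by omega)
        · intro j h1 h2
          show (if j = 0 then fS n j else 0) = 0
          exact if_neg (by omega)
      rw [hdel, show fS n i.val = (n:ℝ) - 2 from if_neg h0]
      nlinarith [hn']
    · have hadj : ∀ j : Fin n,
          ¬ (SimpleGraph.fromRel
            (fun u v : Fin n => u.val = 0 ∧ 1 ≤ v.val ∧ v.val ≤ n - 4)).Adj i j := by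
        intro j
        rw [SimpleGraph.fromRel_adj, ne_eq, Fin.ext_iff]
        omega
      have hdel : (∑ j : Fin n, if (SimpleGraph.fromRel
            (fun u v : Fin n => u.val = 0 ∧ 1 ≤ v.val ∧ v.val ≤ n - 4)).Adj i j
            then fS n j.val else 0) = 0 :=
        Finset.sum_eq_zero fun j _ => if_neg (hadj j)
      rw [hdel, show fS n i.val = (n:ℝ) - 2 from if_neg h0]
      nlinarith [hn']

private lemma SK_rows {n : ℕ} (hn : 18 ≤ n)
    [DecidableRel (⊤ \ SimpleGraph.fromRel
      (fun u v : Fin n => (u.val = 0 ∧ 1 ≤ v.val ∧ v.val ≤ n - 5) ∨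
        (n - 3 ≤ u.val ∧ n - 3 ≤ v.val)) : SimpleGraph (Fin n)).Adj]
    (i : Fin n) :
    (((⊤ \ SimpleGraph.fromRel
        (fun u v : Fin n => (u.val = 0 ∧ 1 ≤ v.val ∧ v.val ≤ n - 5) ∨
          (n - 3 ≤ u.val ∧ n - 3 ≤ v.val)) :
            SimpleGraph (Fin n)).adjMatrix ℝ) *ᵥ (fun j => fSK n j.val)) i
      ≤ (((n:ℝ)^2 - 2*(n:ℝ) - 4)/(n:ℝ)) * fSK n i.val := by
  classical
  have hn' : (18 : ℝ) ≤ (n : ℝ) := by exact_mod_cast hn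
  have hNpos : (0 : ℝ) < (n : ℝ) := by linarith
  have hi := i.isLt
  have h18 : (0:ℝ) ≤ (n:ℝ) - 18 := by linarith
  have htot : (∑ j : Fin n, fSK n j.val)
      = (8*(n:ℝ)+8) + ((n:ℝ) - 5) * (2*(n:ℝ)^2 - 8) + 2*(n:ℝ)^2
        + 3 * (2*(n:ℝ)^2 - 3*(n:ℝ) - 12) := by
    rw [Fin.sum_univ_eq_sum_range (fun j => fSK n j) n]
    refine sum_range_eval' hn _ _ _ _ _ ?_ ?_ ?_ ?_
    · exact if_pos rfl
    · intro j h1 h2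
      show fSK n j = 2*(n:ℝ)^2 - 8
      unfold fSK; rw [if_neg (by omega), if_pos h2]
    · show fSK n (n - 4) = 2*(n:ℝ)^2
      unfold fSK; rw [if_neg (by omega), if_neg (by omega), if_pos rfl]
    · intro j h1 h2
      show fSK n j = 2*(n:ℝ)^2 - 3*(n:ℝ) - 12
      unfold fSK; rw [if_neg (by omega), if_neg (by omega), if_neg (by omega)]
  rw [mulVec_sdiff', htot, div_mul_eq_mul_div, le_div_iff₀ hNpos]
  by_cases h0 : i.val = 0
  · have hadj : ∀ j : Fin n,
        (SimpleGraph.fromRel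
          (fun u v : Fin n => (u.val = 0 ∧ 1 ≤ v.val ∧ v.val ≤ n - 5) ∨
            (n - 3 ≤ u.val ∧ n - 3 ≤ v.val))).Adj i j
          ↔ (1 ≤ j.val ∧ j.val ≤ n - 5) := by
      intro j
      rw [SimpleGraph.fromRel_adj, ne_eq, Fin.ext_iff]
      omega
    have hdel : (∑ j : Fin n, if (SimpleGraph.fromRel
          (fun u v : Fin n => (u.val = 0 ∧ 1 ≤ v.val ∧ v.val ≤ n - 5) ∨
            (n - 3 ≤ u.val ∧ n - 3 ≤ v.val))).Adj i j
          then fSK n j.val else 0)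
        = 0 + ((n:ℝ) - 5) * (2*(n:ℝ)^2 - 8) + 0 + 3 * 0 := by
      rw [Finset.sum_congr rfl (fun j _ => if_congr (hadj j) rfl rfl),
        Fin.sum_univ_eq_sum_range (fun k => if 1 ≤ k ∧ k ≤ n - 5 then fSK n k else 0) n]
      refine sum_range_eval' hn _ _ _ _ _ ?_ ?_ ?_ ?_
      · exact if_neg (by omega)
      · intro j h1 h2
        show (if 1 ≤ j ∧ j ≤ n - 5 then fSK n j else 0) = 2*(n:ℝ)^2 - 8
        rw [if_pos ⟨h1, h2⟩]
        unfold fSK; rw [if_neg (by omega), if_pos h2]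
      · show (if 1 ≤ n - 4 ∧ n - 4 ≤ n - 5 then fSK n (n - 4) else 0) = 0
        exact if_neg (by omega)
      · intro j h1 h2
        show (if 1 ≤ j ∧ j ≤ n - 5 then fSK n j else 0) = 0
        exact if_neg (by omega)
    rw [hdel, show fSK n i.val = 8*(n:ℝ)+8 from if_pos h0]
    nlinarith [hn', mul_nonneg h18 h18]
  · by_cases hA : i.val ≤ n - 5
    · have hadj : ∀ j : Fin n,
          (SimpleGraph.fromRel
            (fun u v : Fin n => (u.val = 0 ∧ 1 ≤ v.val ∧ v.val ≤ n - 5) ∨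
              (n - 3 ≤ u.val ∧ n - 3 ≤ v.val))).Adj i j
            ↔ (j.val = 0) := by
        intro j
        rw [SimpleGraph.fromRel_adj, ne_eq, Fin.ext_iff]
        omega
      have hdel : (∑ j : Fin n, if (SimpleGraph.fromRel
            (fun u v : Fin n => (u.val = 0 ∧ 1 ≤ v.val ∧ v.val ≤ n - 5) ∨
              (n - 3 ≤ u.val ∧ n - 3 ≤ v.val))).Adj i j
            then fSK n j.val else 0)
          = (8*(n:ℝ)+8) + ((n:ℝ) - 5) * 0 + 0 + 3 * 0 := by
        rw [Finset.sum_congr rfl (fun j _ => if_congr (hadj j) rfl rfl),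
          Fin.sum_univ_eq_sum_range (fun k => if k = 0 then fSK n k else 0) n]
        refine sum_range_eval' hn _ _ _ _ _ ?_ ?_ ?_ ?_
        · show (if (0:ℕ) = 0 then fSK n 0 else 0) = 8*(n:ℝ)+8
          rw [if_pos rfl]; exact if_pos rfl
        · intro j h1 h2
          show (if j = 0 then fSK n j else 0) = 0
          exact if_neg (by omega)
        · show (if n - 4 = 0 then fSK n (n - 4) else 0) = 0
          exact if_neg (by omega)
        · intro j h1 h2
          show (if j = 0 then fSK n j else 0) = 0
          exact if_neg (by omega)
      have hv : fSK n i.val = 2*(n:ℝ)^2 - 8 := by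
        unfold fSK; rw [if_neg h0, if_pos hA]
      rw [hdel, hv]
      nlinarith [hn', mul_nonneg h18 h18]
    · by_cases hd : i.val = n - 4
      · have hadj : ∀ j : Fin n,
            ¬ (SimpleGraph.fromRel
              (fun u v : Fin n => (u.val = 0 ∧ 1 ≤ v.val ∧ v.val ≤ n - 5) ∨
                (n - 3 ≤ u.val ∧ n - 3 ≤ v.val))).Adj i j := by
          intro j
          rw [SimpleGraph.fromRel_adj, ne_eq, Fin.ext_iff]
          omega
        have hdel : (∑ j : Fin n, if (SimpleGraph.fromRel
              (fun u v : Fin n => (u.val = 0 ∧ 1 ≤ v.val ∧ v.val ≤ n - 5) ∨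
                (n - 3 ≤ u.val ∧ n - 3 ≤ v.val))).Adj i j
              then fSK n j.val else 0) = 0 :=
          Finset.sum_eq_zero fun j _ => if_neg (hadj j)
        have hv : fSK n i.val = 2*(n:ℝ)^2 := by
          unfold fSK; rw [if_neg h0, if_neg (by omega), if_pos hd]
        rw [hdel, hv]
        nlinarith [hn', mul_nonneg h18 h18]
      · have hlast : n - 3 ≤ i.val := by omega
        have hadj : ∀ j : Fin n,
            (SimpleGraph.fromRel
              (fun u v : Fin n => (u.val = 0 ∧ 1 ≤ v.val ∧ v.val ≤ n - 5) ∨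
                (n - 3 ≤ u.val ∧ n - 3 ≤ v.val))).Adj i j
              ↔ (n - 3 ≤ j.val ∧ ¬ j.val = i.val) := by
          intro j
          rw [SimpleGraph.fromRel_adj, ne_eq, Fin.ext_iff]
          omega
        have hpt : ∀ j : Fin n, (if (SimpleGraph.fromRel
              (fun u v : Fin n => (u.val = 0 ∧ 1 ≤ v.val ∧ v.val ≤ n - 5) ∨
                (n - 3 ≤ u.val ∧ n - 3 ≤ v.val))).Adj i j
              then fSK n j.val else 0)
            = (if n - 3 ≤ j.val then fSK n j.val else 0)
              - (if j.val = i.val then fSK n j.val else 0) := by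
          intro j
          rw [if_congr (hadj j) rfl rfl]
          by_cases hj : j.val = i.val
          · rw [if_neg (by omega), if_pos (by omega), if_pos hj]; ring
          · by_cases hj2 : n - 3 ≤ j.val
            · rw [if_pos ⟨hj2, hj⟩, if_pos hj2, if_neg hj]; ring
            · rw [if_neg (by tauto), if_neg hj2, if_neg hj]; ring
        have hdel : (∑ j : Fin n, if (SimpleGraph.fromRel
              (fun u v : Fin n => (u.val = 0 ∧ 1 ≤ v.val ∧ v.val ≤ n - 5) ∨
                (n - 3 ≤ u.val ∧ n - 3 ≤ v.val))).Adj i j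
              then fSK n j.val else 0)
            = 2 * (2*(n:ℝ)^2 - 3*(n:ℝ) - 12) := by
          rw [Finset.sum_congr rfl (fun j _ => hpt j), Finset.sum_sub_distrib,
            Fin.sum_univ_eq_sum_range (fun k => if n - 3 ≤ k then fSK n k else 0) n,
            Fin.sum_univ_eq_sum_range (fun k => if k = i.val then fSK n k else 0) n]
          have e1 : ∑ j ∈ Finset.range n, (fun k => if n - 3 ≤ k then fSK n k else 0) j
              = 0 + ((n:ℝ) - 5) * 0 + 0 + 3 * (2*(n:ℝ)^2 - 3*(n:ℝ) - 12) := by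
            refine sum_range_eval' hn _ _ _ _ _ ?_ ?_ ?_ ?_
            · exact if_neg (by omega)
            · intro j h1 h2
              show (if n - 3 ≤ j then fSK n j else 0) = 0
              exact if_neg (by omega)
            · show (if n - 3 ≤ n - 4 then fSK n (n - 4) else 0) = 0
              exact if_neg (by omega)
            · intro j h1 h2
              show (if n - 3 ≤ j then fSK n j else 0) = 2*(n:ℝ)^2 - 3*(n:ℝ) - 12
              rw [if_pos h1]
              unfold fSK; rw [if_neg (by omega), if_neg (by omega), if_neg (by omega)]
          have e2 : ∑ j ∈ Finset.range n, (fun k => if k = i.val then fSK n k else 0) j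
              = 2*(n:ℝ)^2 - 3*(n:ℝ) - 12 := by
            rw [Finset.sum_ite_eq' (Finset.range n) i.val (fSK n),
              if_pos (Finset.mem_range.mpr hi)]
            unfold fSK; rw [if_neg (by omega), if_neg (by omega), if_neg (by omega)]
          rw [e1, e2]; ring
        have hv : fSK n i.val = 2*(n:ℝ)^2 - 3*(n:ℝ) - 12 := by
          unfold fSK; rw [if_neg h0, if_neg (by omega), if_neg (by omega)]
        rw [hdel, hv]
        nlinarith [hn', mul_nonneg h18 h18, mul_nonneg (mul_nonneg h18 h18) h18]


/-- For `n ≥ 18`, `μ(K_n \ E(S_{n−4} ∪ K_3)) < μ(K_n \ E(S_{n−3}))`. -/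
theorem stmt11 (n : ℕ) (hn : 18 ≤ n) :
    specRad (KnDelSK n) < specRad (KnDelS n) := by
  have hn' : (18:ℝ) ≤ (n:ℝ) := by exact_mod_cast hn
  have hNpos : (0:ℝ) < (n:ℝ) := by linarith
  unfold specRad
  letI instS : DecidableRel (KnDelS n).Adj := Classical.decRel _
  letI instSK : DecidableRel (KnDelSK n).Adj := Classical.decRel _
  have hS : ((n:ℝ) - 2) ≤ sSup (spectrum ℝ ((KnDelS n).adjMatrix ℝ)) := by
    refine lower_bound' (by omega) adj_isHermitian'
      (w := fun j : Fin n => fS n j.val) ?_ ?_ ?_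
    · intro j; unfold fS; split_ifs <;> linarith
    · intro h
      have h0 := congrFun h (⟨0, by omega⟩ : Fin n)
      rw [show fS n (⟨0, by omega⟩ : Fin n).val = 3 from if_pos rfl] at h0
      norm_num at h0
    · exact fun i => @S_rows n hn instS i
  have hSK : sSup (spectrum ℝ ((KnDelSK n).adjMatrix ℝ))
      ≤ ((n:ℝ)^2 - 2*(n:ℝ) - 4)/(n:ℝ) := by
    refine upper_bound' adj_isHermitian' (fun i j => adj_nonneg' i j)
      (v := fun j : Fin n => fSK n j.val) ?_ ?_ ?_
    · intro j; unfold fSK; split_ifs <;> nlinarith [hn']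
    · apply div_nonneg _ hNpos.le; nlinarith [hn']
    · exact fun i => @SK_rows n hn instSK i
  have hmid : ((n:ℝ)^2 - 2*(n:ℝ) - 4)/(n:ℝ) < (n:ℝ) - 2 := by
    rw [div_lt_iff₀ hNpos]; nlinarith [hn']
  calc sSup (spectrum ℝ ((KnDelSK n).adjMatrix ℝ)) ≤ _ := hSK
    _ < (n:ℝ) - 2 := hmid
    _ ≤ _ := hS
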